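/- Let L = (k' - 1)/(k' + 1) with k' ∈ (0,1), k² = 1 - k'². For each a ∈ (-K, K], let C_a be the circle with center ((dn a - 1)/(dn a + 1), 0) and radius 2 cn a/(1 + dn a). Then the power of the point x = (L² + 1)/(2L) (on the radical axis) with respect to C_a equals ((L² - 1)/(2L))², independently of a; i.e., all circles C_a belong to the coaxal pencil determined by the unit circle T and the limit point L. -/
import Mathlib


noncomputable def g (k θ : ℝ) : ℝ := ∫ t in (0:ℝ)..θ, 1 / Real.sqrt (1 - k^2 * Real.sin t ^ 2)

/-- `K` is the complete elliptic integral `g(π/2)`. -/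
noncomputable def KK (k : ℝ) : ℝ := g k (Real.pi / 2)

/-- The amplitude function, inverse of `g`. -/
noncomputable def am (k : ℝ) : ℝ → ℝ := Function.invFun (g k)

noncomputable def cn (k u : ℝ) : ℝ := Real.cos (am k u)
noncomputable def sn (k u : ℝ) : ℝ := Real.sin (am k u)
noncomputable def dn (k u : ℝ) : ℝ := Real.sqrt (1 - k^2 * sn k u ^ 2)

/-- Power of the point `x` (on the real axis) with respect to the circle with real
center `c` and radius `r`. -/
def powerPt (x c r : ℝ) : ℝ := (x - c) ^ 2 - r ^ 2

theorem stmt_4 (k' : ℝ) (hk' : k' ∈ Set.Ioo (0:ℝ) 1) (k : ℝ) (hk : k = Real.sqrt (1 - k' ^ 2))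
    (L : ℝ) (hL : L = (k' - 1) / (k' + 1)) (a : ℝ) (ha : a ∈ Set.Ioc (-KK k) (KK k)) :
    powerPt ((L ^ 2 + 1) / (2 * L)) ((dn k a - 1) / (dn k a + 1)) (2 * cn k a / (1 + dn k a))
      = ((L ^ 2 - 1) / (2 * L)) ^ 2 := by
  obtain ⟨h0, h1⟩ := hk'
  have hk2 : k ^ 2 = 1 - k' ^ 2 := by
    rw [hk, Real.sq_sqrt]; nlinarith
  have hsc : sn k a ^ 2 + cn k a ^ 2 = 1 := by
    rw [sn, cn]; exact Real.sin_sq_add_cos_sq _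
  have hsle : sn k a ^ 2 ≤ 1 := by nlinarith [sq_nonneg (cn k a)]
  have hd2 : dn k a ^ 2 = 1 - k ^ 2 * sn k a ^ 2 := by
    rw [dn, Real.sq_sqrt]; nlinarith
  have hdnn : (0:ℝ) ≤ dn k a := Real.sqrt_nonneg _
  have hd1 : dn k a + 1 ≠ 0 := by nlinarith
  have hd1' : 1 + dn k a ≠ 0 := by nlinarith
  have hk'1 : k' + 1 ≠ 0 := by nlinarith
  have hk'm : k' - 1 ≠ 0 := by nlinarith
  have hL0 : L ≠ 0 := by
    rw [hL]
    exact div_ne_zero (by nlinarith) hk'1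
  have hnum : (1:ℝ) - k' ^ 2 ≠ 0 := by nlinarith
  have hc2 : cn k a ^ 2 = (dn k a ^ 2 - k' ^ 2) / (1 - k' ^ 2) := by
    field_simp
    linear_combination (-1 : ℝ) * hd2 + (1 - k' ^ 2) * hsc + sn k a ^ 2 * hk2
  subst hL
  unfold powerPt
  have hr : (2 * cn k a / (1 + dn k a)) ^ 2
      = 4 * ((dn k a ^ 2 - k' ^ 2) / (1 - k' ^ 2)) / (1 + dn k a) ^ 2 := by
    rw [div_pow, mul_pow, hc2]; ring
  rw [hr]
  field_simp
  ring
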